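/- Let F1 ≡ 0 and F2(τ, θ1, θ1', θ2, θ2') = (1 − θ1²) sin(ω1 τ), and take p = 1. Then for all (X0, Y0) ∈ ℝ²: 𝒢1(X0, Y0) = −π (X0² + 3 Y0² − 8(2 − √2)) / (8 (2 − √2)^{3/2}) and 𝒢2(X0, Y0) = −π X0 Y0 / (4 (2 − √2)^{3/2}). -/

import Mathlib

open Real MeasureTheory intervalIntegral

lemma hasDerivAt_G1' (ω s q X Y : ℝ) (hω : ω ≠ 0) (hs : s ≠ 0) (hq2 : q^2 = 2*s) (τ : ℝ) :
    HasDerivAt (fun t => ((ω*t - sin (ω*t)*cos (ω*t))/2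
      - (X^2*((ω*t)/8 - sin (ω*t)*cos (ω*t)*(1-2*sin (ω*t)^2)/8)
         + (X*Y*sin (ω*t)^4/2
         + Y^2*(3*(ω*t)/8 - sin (ω*t)*cos (ω*t)/2 + sin (ω*t)*cos (ω*t)*(1-2*sin (ω*t)^2)/8)))/(2*s))/ω)
      (sin (ω*τ) * ((1 - ((X*cos (ω*τ)+Y*sin (ω*τ))/q)^2) * sin (ω*τ))) τ := by
  have hid : HasDerivAt (fun t : ℝ => ω*t) ω τ := by
    simpa using (hasDerivAt_id τ).const_mul ω
  have hS : HasDerivAt (fun t => sin (ω*t)) (cos (ω*τ)*ω) τ :=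
    (Real.hasDerivAt_sin (ω*τ)).comp τ hid
  have hC : HasDerivAt (fun t => cos (ω*t)) (-sin (ω*τ)*ω) τ :=
    (Real.hasDerivAt_cos (ω*τ)).comp τ hid
  have big := ((((hid.sub (hS.mul hC)).div_const 2).sub
    (((((hid.div_const 8).sub ((((hS.mul hC).mul ((hasDerivAt_const τ (1:ℝ)).sub
        ((hS.pow 2).const_mul 2))).div_const 8))).const_mul (X^2)).add
      ((((hS.pow 4).const_mul (X*Y)).div_const 2).add
       (((((hid.const_mul 3).div_const 8).sub ((hS.mul hC).div_const 2)).add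
        (((hS.mul hC).mul ((hasDerivAt_const τ (1:ℝ)).sub
          ((hS.pow 2).const_mul 2))).div_const 8)).const_mul (Y^2)))).div_const (2*s))).div_const ω)
  convert big using 1
  case e'_4 => rfl
  case e'_5 => rfl
  case e'_8 => rfl
  have hc : cos (ω*τ)^2 = 1 - sin (ω*τ)^2 := Real.cos_sq' _
  rw [div_pow, hq2]
  simp only [Pi.mul_apply, Pi.sub_apply, Pi.pow_apply]
  field_simp
  ring_nf
  rw [hc]
  ring

lemma hasDerivAt_G2' (ω s q X Y : ℝ) (hω : ω ≠ 0) (hs : s ≠ 0) (hq2 : q^2 = 2*s) (τ : ℝ) :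
    HasDerivAt (fun t => ((sin (ω*t)^2/2
      - (X^2*(-cos (ω*t)^4/4)
         + (2*X*Y*((ω*t)/8 - sin (ω*t)*cos (ω*t)*(1-2*sin (ω*t)^2)/8)
         + Y^2*sin (ω*t)^4/4))/(2*s))/ω))
      (cos (ω*τ) * ((1 - ((X*cos (ω*τ)+Y*sin (ω*τ))/q)^2) * sin (ω*τ))) τ := by
  have hid : HasDerivAt (fun t : ℝ => ω*t) ω τ := by
    simpa using (hasDerivAt_id τ).const_mul ω
  have hS : HasDerivAt (fun t => sin (ω*t)) (cos (ω*τ)*ω) τ :=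
    (Real.hasDerivAt_sin (ω*τ)).comp τ hid
  have hC : HasDerivAt (fun t => cos (ω*t)) (-sin (ω*τ)*ω) τ :=
    (Real.hasDerivAt_cos (ω*τ)).comp τ hid
  have big := ((((hS.pow 2).div_const 2).sub
    ((((((hC.pow 4).neg.div_const 4).const_mul (X^2)).add
      ((((hid.div_const 8).sub ((((hS.mul hC).mul ((hasDerivAt_const τ (1:ℝ)).sub
          ((hS.pow 2).const_mul 2))).div_const 8))).const_mul (2*X*Y)).add
       (((hS.pow 4).const_mul (Y^2)).div_const 4))).div_const (2*s)))).div_const ω)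
  convert big using 1
  case e'_4 => rfl
  case e'_5 => rfl
  case e'_8 => rfl
  have hc : cos (ω*τ)^2 = 1 - sin (ω*τ)^2 := Real.cos_sq' _
  rw [div_pow, hq2]
  simp only [Pi.mul_apply, Pi.sub_apply, Pi.pow_apply]
  field_simp
  ring_nf
  rw [hc]
  ring

set_option maxHeartbeats 1000000 in
/-- The explicit computation of the averaged functions `𝒢1, 𝒢2` for the
perturbation `F1 ≡ 0`, `F2 = (1 - θ1²) sin(ω1 τ)` with `p = 1`. -/
theorem averaged_functions_corollary1
    (ω1 T1 : ℝ)
    (hω1 : ω1 = Real.sqrt (2 - Real.sqrt 2))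
    (hT1 : T1 = 2 * π / ω1)
    (F1 F2 : ℝ → ℝ → ℝ → ℝ → ℝ → ℝ)
    (hF1 : ∀ τ a b c d, F1 τ a b c d = 0)
    (hF2 : ∀ τ a b c d, F2 τ a b c d = (1 - a ^ 2) * sin (ω1 * τ))
    (A1 B1 C1 D1 : ℝ → ℝ → ℝ → ℝ)
    (hA1 : ∀ X0 Y0 τ, A1 X0 Y0 τ =
      (X0 * cos (ω1 * τ) + Y0 * sin (ω1 * τ)) / Real.sqrt (4 - 2 * Real.sqrt 2))
    (hB1 : ∀ X0 Y0 τ, B1 X0 Y0 τ =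
      (Y0 * cos (ω1 * τ) - X0 * sin (ω1 * τ)) / Real.sqrt 2)
    (hC1 : ∀ X0 Y0 τ, C1 X0 Y0 τ =
      (X0 * cos (ω1 * τ) + Y0 * sin (ω1 * τ)) / Real.sqrt (2 - Real.sqrt 2))
    (hD1 : ∀ X0 Y0 τ, D1 X0 Y0 τ = Y0 * cos (ω1 * τ) - X0 * sin (ω1 * τ)) :
    ∀ X0 Y0 : ℝ,
      (∫ τ in (0:ℝ)..(1 * T1), sin (ω1 * τ) *
          (Real.sqrt 2 * F1 τ (A1 X0 Y0 τ) (B1 X0 Y0 τ) (C1 X0 Y0 τ) (D1 X0 Y0 τ) +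
            F2 τ (A1 X0 Y0 τ) (B1 X0 Y0 τ) (C1 X0 Y0 τ) (D1 X0 Y0 τ)))
        = -(π * (X0 ^ 2 + 3 * Y0 ^ 2 - 8 * (2 - Real.sqrt 2)) /
            (8 * (2 - Real.sqrt 2) ^ ((3:ℝ) / 2))) ∧
      (∫ τ in (0:ℝ)..(1 * T1), cos (ω1 * τ) *
          (Real.sqrt 2 * F1 τ (A1 X0 Y0 τ) (B1 X0 Y0 τ) (C1 X0 Y0 τ) (D1 X0 Y0 τ) +
            F2 τ (A1 X0 Y0 τ) (B1 X0 Y0 τ) (C1 X0 Y0 τ) (D1 X0 Y0 τ)))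
        = -(π * X0 * Y0 / (4 * (2 - Real.sqrt 2) ^ ((3:ℝ) / 2))) := by
  have h2lt : Real.sqrt 2 < 2 := by
    nlinarith [Real.sq_sqrt (by norm_num : (0:ℝ) ≤ 2), Real.sqrt_nonneg 2]
  set s : ℝ := 2 - Real.sqrt 2 with hs_def
  have hs : 0 < s := by rw [hs_def]; linarith
  have hω0 : 0 < ω1 := by rw [hω1]; exact Real.sqrt_pos.mpr hs
  have hq2 : (Real.sqrt (4 - 2 * Real.sqrt 2))^2 = 2*s := by
    rw [Real.sq_sqrt (by linarith), hs_def]; ring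
  have hsqs : Real.sqrt s = ω1 := by rw [hω1, hs_def]
  have hrpow : s ^ ((3:ℝ)/2) = s * ω1 := by
    rw [show ((3:ℝ)/2) = 1 + 1/2 by norm_num, Real.rpow_add hs, Real.rpow_one,
      ← Real.sqrt_eq_rpow, hsqs]
  have hωT : ω1 * (1 * T1) = 2 * π := by
    rw [hT1]; field_simp
  intro X0 Y0
  simp only [hF1, hF2, hA1, mul_zero, zero_add]
  constructor
  · rw [intervalIntegral.integral_eq_sub_of_hasDerivAt
      (f := fun t => ((ω1*t - sin (ω1*t)*cos (ω1*t))/2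
        - (X0^2*((ω1*t)/8 - sin (ω1*t)*cos (ω1*t)*(1-2*sin (ω1*t)^2)/8)
           + (X0*Y0*sin (ω1*t)^4/2
           + Y0^2*(3*(ω1*t)/8 - sin (ω1*t)*cos (ω1*t)/2 + sin (ω1*t)*cos (ω1*t)*(1-2*sin (ω1*t)^2)/8)))/(2*s))/ω1)
      (fun τ _ => hasDerivAt_G1' ω1 s _ X0 Y0 hω0.ne' hs.ne' hq2 τ)
      ((Continuous.intervalIntegrable (by fun_prop) _ _))]
    simp only [hωT, mul_zero, Real.sin_two_pi, Real.cos_two_pi, Real.sin_zero, Real.cos_zero]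
    rw [hrpow]
    field_simp
    ring
  · rw [intervalIntegral.integral_eq_sub_of_hasDerivAt
      (f := fun t => ((sin (ω1*t)^2/2
        - (X0^2*(-cos (ω1*t)^4/4)
           + (2*X0*Y0*((ω1*t)/8 - sin (ω1*t)*cos (ω1*t)*(1-2*sin (ω1*t)^2)/8)
           + Y0^2*sin (ω1*t)^4/4))/(2*s))/ω1))
      (fun τ _ => hasDerivAt_G2' ω1 s _ X0 Y0 hω0.ne' hs.ne' hq2 τ)
      ((Continuous.intervalIntegrable (by fun_prop) _ _))]
    simp only [hωT, mul_zero, Real.sin_two_pi, Real.cos_two_pi, Real.sin_zero, Real.cos_zero]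
    rw [hrpow]
    field_simp
    ring
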